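/- Let f : ℕ → ℚ satisfy f(2) = 0 and f(n) = ((n-2)/(n-1))·(1 + f(n-1)) for n ≥ 3. Then f(n) = n/2 − 1 for all n ≥ 2, and in particular f(n) → ∞ and f(n)/n → 1/2 as n → ∞. -/

import Mathlib

open Filter

theorem stmt_17 (f : ℕ → ℚ)
    (h2 : f 2 = 0)
    (hrec : ∀ n : ℕ, 3 ≤ n →
      f n = (((n : ℚ) - 2) / ((n : ℚ) - 1)) * (1 + f (n - 1))) :
    (∀ n : ℕ, 2 ≤ n → f n = (n : ℚ) / 2 - 1) ∧
    Tendsto (fun n : ℕ => (f n : ℝ)) atTop atTop ∧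
    Tendsto (fun n : ℕ => (f n : ℝ) / (n : ℝ)) atTop (nhds (1 / 2)) := by
  have key : ∀ n : ℕ, 2 ≤ n → f n = (n : ℚ) / 2 - 1 := by
    intro n hn
    induction n with
    | zero => omega
    | succ m ih =>
      rcases Nat.lt_or_ge m 2 with hm | hm
      · interval_cases m
        · omega
        · simpa using h2
      · have h3 : 3 ≤ m + 1 := by omega
        have := hrec (m + 1) h3
        rw [Nat.add_sub_cancel] at this
        rw [this, ih hm]
        have hm1 : ((m : ℚ) + 1) - 1 ≠ 0 := by
          push_cast
          have : (2 : ℚ) ≤ (m : ℚ) := by exact_mod_cast hm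
          nlinarith
        push_cast at hm1
        field_simp
        rw [div_eq_iff (by push_cast; exact hm1)]; push_cast; ring
  refine ⟨key, ?_, ?_⟩
  · have heq : (fun n : ℕ => (f n : ℝ)) =ᶠ[atTop] fun n : ℕ => (n : ℝ) / 2 - 1 := by
      filter_upwards [eventually_ge_atTop 2] with n hn
      rw [key n hn]; push_cast; ring
    refine Tendsto.congr' heq.symm ?_
    have h := tendsto_atTop_add_const_right atTop (-1 : ℝ)
      ((tendsto_natCast_atTop_atTop (R := ℝ)).atTop_div_const (by norm_num : (0:ℝ) < 2))
    simpa [sub_eq_add_neg] using h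
  · have heq : (fun n : ℕ => (f n : ℝ) / (n : ℝ)) =ᶠ[atTop] fun n : ℕ => 1 / 2 - 1 / (n : ℝ) := by
      filter_upwards [eventually_ge_atTop 2] with n hn
      have hn0 : (n : ℝ) ≠ 0 := by positivity
      rw [key n hn]; push_cast; field_simp
    refine Tendsto.congr' heq.symm ?_
    have : Tendsto (fun n : ℕ => 1 / (n : ℝ)) atTop (nhds 0) :=
      tendsto_one_div_atTop_nhds_zero_nat
    simpa using tendsto_const_nhds.sub this
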